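/- The composite function φ(x) := f(x, y*(x)) is differentiable, and its gradient is given by the hypergradient formula ∇φ(x) = ∇_x f(x, y*(x)) − A(x)* H(x)^{−1} ∇_y f(x, y*(x)), where A(x)* : F → E is the adjoint of A(x). -/

import Mathlib

open RealInnerProductSpace

/-- Partial gradient in the first variable of a real-valued function on `E × F`. -/
noncomputable def gradX {E F : Type*}
    [NormedAddCommGroup E] [InnerProductSpace ℝ E] [CompleteSpace E]
    [NormedAddCommGroup F] [InnerProductSpace ℝ F] [CompleteSpace F]
    (f : E → F → ℝ) (x : E) (y : F) : E :=
  gradient (fun u => f u y) x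

/-- Partial gradient in the second variable of a real-valued function on `E × F`. -/
noncomputable def gradY {E F : Type*}
    [NormedAddCommGroup E] [InnerProductSpace ℝ E] [CompleteSpace E]
    [NormedAddCommGroup F] [InnerProductSpace ℝ F] [CompleteSpace F]
    (f : E → F → ℝ) (x : E) (y : F) : F :=
  gradient (fun v => f x v) y

/-- the composite function `φ(x) = f(x, y*(x))` is differentiable
and its gradient is given by the hypergradient formula
`∇φ(x) = ∇ₓf(x,y*(x)) - A(x)* H(x)⁻¹ ∇_y f(x,y*(x))`, where `A(x)` is the partial
derivative in `x` of `x' ↦ ∇_y g(x', y)` at `(x, y*(x))`, and `H(x)` is the Hessian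
of `g(x,·)` at `y*(x)`, assumed self-adjoint and invertible (with inverse `Hinv x`). -/
theorem hypergradient_formula
    {E : Type*} [NormedAddCommGroup E] [InnerProductSpace ℝ E] [FiniteDimensional ℝ E]
    {F : Type*} [NormedAddCommGroup F] [InnerProductSpace ℝ F] [FiniteDimensional ℝ F]
    (f g : E → F → ℝ)
    (hf : Differentiable ℝ (fun p : E × F => f p.1 p.2))
    (hgy : Differentiable ℝ (fun p : E × F => gradY g p.1 p.2))
    (ystar : E → F) (hystar : Differentiable ℝ ystar)
    (hopt : ∀ x : E, gradY g x (ystar x) = 0)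
    (A : E → (E →L[ℝ] F))
    (hA : ∀ x : E, A x = fderiv ℝ (fun u => gradY g u (ystar x)) x)
    (H : E → (F →L[ℝ] F))
    (hH : ∀ x : E, H x = fderiv ℝ (fun v => gradY g x v) (ystar x))
    (hself : ∀ x : E, ∀ v w : F, ⟪(H x) v, w⟫ = ⟪v, (H x) w⟫)
    (Hinv : E → (F →L[ℝ] F))
    (hinv1 : ∀ x : E, (H x).comp (Hinv x) = ContinuousLinearMap.id ℝ F)
    (hinv2 : ∀ x : E, (Hinv x).comp (H x) = ContinuousLinearMap.id ℝ F) :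
    Differentiable ℝ (fun x => f x (ystar x)) ∧
      ∀ x : E, gradient (fun u => f u (ystar u)) x
        = gradX f x (ystar x)
          - (ContinuousLinearMap.adjoint (A x)) ((Hinv x) (gradY f x (ystar x))) := by
  have hprod : ∀ x : E, HasFDerivAt (fun u : E => (u, ystar u))
      ((ContinuousLinearMap.id ℝ E).prod (fderiv ℝ ystar x)) x := fun x =>
    HasFDerivAt.prodMk (hasFDerivAt_id x) (hystar x).hasFDerivAt
  have hφdiff : Differentiable ℝ (fun x => f x (ystar x)) := fun x =>
    (DifferentiableAt.comp (g := fun p : E × F => f p.1 p.2) (f := fun u => (u, ystar u)) x (hf (x, ystar x)) (((hprod x).differentiableAt)))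
  refine ⟨hφdiff, fun x => ?_⟩
  set y := ystar x with hy
  set Dy := fderiv ℝ ystar x with hDy
  set D := fderiv ℝ (fun p : E × F => gradY g p.1 p.2) (x, y) with hD
  set Df := fderiv ℝ (fun p : E × F => f p.1 p.2) (x, y) with hDf
  have hDg : HasFDerivAt (fun p : E × F => gradY g p.1 p.2) D (x, y) :=
    (hgy (x, y)).hasFDerivAt
  have hFf : HasFDerivAt (fun p : E × F => f p.1 p.2) Df (x, y) :=
    (hf (x, y)).hasFDerivAt
  -- A x = D ∘ inl
  have hAx : A x = D.comp (ContinuousLinearMap.inl ℝ E F) := by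
    rw [hA x]
    exact (HasFDerivAt.comp (g := fun p : E × F => gradY g p.1 p.2) (f := fun u => (u, y)) x hDg (hasFDerivAt_prodMk_left x y)).fderiv
  have hHx : H x = D.comp (ContinuousLinearMap.inr ℝ E F) := by
    rw [hH x]
    exact (hDg.comp (ystar x) (hasFDerivAt_prodMk_right x y)).fderiv
  -- implicit function: A x + H x ∘ Dy = 0
  have hchain : HasFDerivAt (fun u => gradY g u (ystar u))
      (D.comp ((ContinuousLinearMap.id ℝ E).prod Dy)) x :=
    HasFDerivAt.comp (g := fun p : E × F => gradY g p.1 p.2) (f := fun u => (u, ystar u)) x hDg (hprod x)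
  have hzero : HasFDerivAt (fun u => gradY g u (ystar u)) (0 : E →L[ℝ] F) x := by
    have : (fun u => gradY g u (ystar u)) = fun _ => (0 : F) := funext hopt
    rw [this]; exact hasFDerivAt_const 0 x
  have hDcomp : D.comp ((ContinuousLinearMap.id ℝ E).prod Dy) = 0 :=
    hchain.unique hzero
  have hDsplit : ∀ h : E, D (h, Dy h) = A x h + H x (Dy h) := by
    intro h
    have : (h, Dy h) = ((h, 0) : E × F) + ((0, Dy h) : E × F) := by simp
    rw [this, map_add, hAx, hHx]
    rfl
  have hDyVal : ∀ h : E, Dy h = -(Hinv x (A x h)) := by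
    intro h
    have h0 : A x h + H x (Dy h) = 0 := by
      rw [← hDsplit h]
      have := congrArg (fun (T : E →L[ℝ] F) => T h) hDcomp
      simpa using this
    have h1 : H x (Dy h) = -(A x h) := eq_neg_of_add_eq_zero_right h0
    have h2 : Hinv x (H x (Dy h)) = Dy h := by
      have := congrArg (fun (T : F →L[ℝ] F) => T (Dy h)) (hinv2 x)
      simpa using this
    rw [← h2, h1, map_neg]
  -- self-adjointness of Hinv
  have hHinvself : ∀ v w : F, ⟪Hinv x v, w⟫ = ⟪v, Hinv x w⟫ := by
    intro v w
    have hw : H x (Hinv x w) = w := by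
      have := congrArg (fun (T : F →L[ℝ] F) => T w) (hinv1 x)
      simpa using this
    have hv : H x (Hinv x v) = v := by
      have := congrArg (fun (T : F →L[ℝ] F) => T v) (hinv1 x)
      simpa using this
    calc ⟪Hinv x v, w⟫ = ⟪Hinv x v, H x (Hinv x w)⟫ := by rw [hw]
      _ = ⟪H x (Hinv x v), Hinv x w⟫ := (hself x _ _).symm
      _ = ⟪v, Hinv x w⟫ := by rw [hv]
  -- partial gradients as compositions of Df
  have hgradX : (InnerProductSpace.toDual ℝ E) (gradX f x y)
      = Df.comp (ContinuousLinearMap.inl ℝ E F) := by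
    have hdiff : DifferentiableAt ℝ (fun u => f u y) x :=
      DifferentiableAt.comp (g := fun p : E × F => f p.1 p.2) (f := fun u => (u, y)) x (hf (x, y)) (hasFDerivAt_prodMk_left x y).differentiableAt
    have h1 : HasFDerivAt (fun u => f u y)
        ((InnerProductSpace.toDual ℝ E) (gradX f x y)) x :=
      hdiff.hasGradientAt.hasFDerivAt
    have h2 : HasFDerivAt (fun u => f u y) (Df.comp (ContinuousLinearMap.inl ℝ E F)) x :=
      HasFDerivAt.comp (g := fun p : E × F => f p.1 p.2) (f := fun u => (u, y)) x hFf (hasFDerivAt_prodMk_left x y)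
    exact h1.unique h2
  have hgradY : (InnerProductSpace.toDual ℝ F) (gradY f x y)
      = Df.comp (ContinuousLinearMap.inr ℝ E F) := by
    have hdiff : DifferentiableAt ℝ (fun v => f x v) y :=
      (hf (x, y)).comp y (hasFDerivAt_prodMk_right x y).differentiableAt
    have h1 : HasFDerivAt (fun v => f x v)
        ((InnerProductSpace.toDual ℝ F) (gradY f x y)) y :=
      hdiff.hasGradientAt.hasFDerivAt
    have h2 : HasFDerivAt (fun v => f x v) (Df.comp (ContinuousLinearMap.inr ℝ E F)) y :=
      hFf.comp y (hasFDerivAt_prodMk_right x y)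
    exact h1.unique h2
  -- derivative of φ
  have hφ : HasFDerivAt (fun u => f u (ystar u))
      (Df.comp ((ContinuousLinearMap.id ℝ E).prod Dy)) x :=
    HasFDerivAt.comp (g := fun p : E × F => f p.1 p.2) (f := fun u => (u, ystar u)) x hFf (hprod x)
  have hgrad : HasGradientAt (fun u => f u (ystar u))
      (gradX f x y - (ContinuousLinearMap.adjoint (A x)) (Hinv x (gradY f x y))) x := by
    rw [hasGradientAt_iff_hasFDerivAt]
    refine hφ.congr_fderiv ?_
    symm
    refine ContinuousLinearMap.ext fun h => ?_
    have e1 : ⟪gradX f x y, h⟫ = Df (h, 0) := by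
      have := congrArg (fun (T : E →L[ℝ] ℝ) => T h) hgradX
      simpa [InnerProductSpace.toDual_apply_apply] using this
    have e2 : ∀ k : F, ⟪gradY f x y, k⟫ = Df (0, k) := by
      intro k
      have := congrArg (fun (T : F →L[ℝ] ℝ) => T k) hgradY
      simpa [InnerProductSpace.toDual_apply_apply] using this
    have esplit : Df (h, Dy h) = Df (h, 0) + Df (0, Dy h) := by
      have : (h, Dy h) = ((h, 0) : E × F) + ((0, Dy h) : E × F) := by simp
      rw [this, map_add]
    have e3 : ⟪gradY f x y, Dy h⟫
        = -⟪(ContinuousLinearMap.adjoint (A x)) (Hinv x (gradY f x y)), h⟫ := by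
      rw [hDyVal h, inner_neg_right, ← hHinvself, ContinuousLinearMap.adjoint_inner_left]
    have : Df.comp ((ContinuousLinearMap.id ℝ E).prod Dy) h = Df (h, Dy h) := rfl
    rw [InnerProductSpace.toDual_apply_apply, this, esplit, ← e1, ← e2, e3, inner_sub_left]
    ring
  rw [hgrad.gradient]
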